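/- Let L be a finite, rank-connected, dismantlable lattice in which every rank set R_i with 0 < i < r(⊤) contains at least two elements, let D be the set of all doubly irreducible elements of L, and suppose that no element of D has a corner in L. Then the sublattice L − D contains no doubly irreducible elements. -/

import Mathlib

/-! Common definitions: finite lattices, rank functions, rank-connectivity,
interval-connectivity, dismantlability, lexicographic shellability. -/

section Defs

variable (L : Type*) [Lattice L]

/-- `r` is a rank function for the bounded lattice `L`: `r ⊥ = 0` and `r`
increases by exactly one along covering relations.  For a finite lattice this
is equivalent to all maximal chains from `⊥` to `⊤` having the same length,
and then `r x` is the length of any maximal chain from `⊥` to `x`. -/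
def IsRankFunction [OrderBot L] (r : L → ℕ) : Prop :=
  r ⊥ = 0 ∧ ∀ a b : L, a ⋖ b → r b = r a + 1

/-- The Hasse diagram of `L` restricted to a set `S`: the (simple) graph on `S`
whose edges are the covering relations of `L` between elements of `S`. -/
def hasseGraph (S : Set L) : SimpleGraph S where
  Adj a b := ((a : L) ⋖ (b : L)) ∨ ((b : L) ⋖ (a : L))
  symm := ⟨fun a b h => Or.symm h⟩
  loopless := ⟨fun a h => by rcases h with h | h <;> exact h.ne rfl⟩

/-- `L` is rank-connected: it is ranked, and for each `i < r ⊤` the bipartite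
graph on the elements of ranks `i` and `i + 1`, with the covering relations as
edges, is connected. -/
def RankConnected [BoundedOrder L] : Prop :=
  ∃ r : L → ℕ, IsRankFunction L r ∧
    ∀ i : ℕ, i < r (⊤ : L) →
      (hasseGraph L {x : L | r x = i ∨ r x = i + 1}).Connected

/-- `L` is interval-connected: it is ranked, and for every pair `x ≤ y` with
`r y ≥ r x + 2` the Hasse diagram of the open interval `(x, y)` (edges being
the covering relations of `L` between its elements) is connected. -/
def IntervalConnected [BoundedOrder L] : Prop :=
  ∃ r : L → ℕ, IsRankFunction L r ∧
    ∀ x y : L, x ≤ y → r x + 2 ≤ r y →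
      (hasseGraph L {z : L | x < z ∧ z < y}).Connected

/-- A finite lattice `L` with `n` elements is dismantlable if there is a chain
`L₁ ⊆ L₂ ⊆ ⋯ ⊆ Lₙ = L` of sublattices of `L` with `|Lᵢ| = i`. -/
def Dismantlable : Prop :=
  ∃ C : ℕ → Set L,
    (∀ i : ℕ, 1 ≤ i → i ≤ Nat.card L → IsSublattice (C i) ∧ (C i).ncard = i) ∧
    (∀ i j : ℕ, i ≤ j → C i ⊆ C j) ∧
    C (Nat.card L) = Set.univ

variable {L}

/-- `l` is an unrefinable (i.e. saturated) chain which is rising with respect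
to the edge labelling `f`: consecutive entries are covering pairs and the
labels of consecutive covering pairs weakly increase. -/
def RisingChain (f : L → L → ℝ) (l : List L) : Prop :=
  l.Chain' (· ⋖ ·) ∧
    (l.zip l.tail).Chain' (fun p q => f p.1 p.2 ≤ f q.1 q.2)

/-- `f` (viewed as a labelling of the covering relations of `L` by reals) is an
L-labelling witnessing lexicographic shellability of the interval `[a, b]`:
(1) every subinterval `[x, y]` has a unique rising unrefinable chain from `x`
to `y`, and (2) the rising chain lexicographically precedes all others: if
`z ∈ [x, y]` covers `x` and `z` is not the second element `x₁` of the rising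
chain, then `f x x₁ < f x z`. -/
def IsLexShellingOn (a b : L) (f : L → L → ℝ) : Prop :=
  (∀ x y : L, a ≤ x → x ≤ y → y ≤ b →
      ∃! l : List L,
        l.head? = some x ∧ l.getLast? = some y ∧ RisingChain f l) ∧
  (∀ x y : L, a ≤ x → x ≤ y → y ≤ b →
      ∀ l : List L, l.head? = some x → l.getLast? = some y → RisingChain f l →
        ∀ x₁ : L, l[1]? = some x₁ →
          ∀ z : L, x ⋖ z → z ≤ y → z ≠ x₁ → f x x₁ < f x z)

variable (L)

/-- `L` is lexicographically shellable. -/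
def LexShellable [BoundedOrder L] : Prop :=
  ∃ f : L → L → ℝ, IsLexShellingOn (⊥ : L) (⊤ : L) f

variable {L}

/-- `x` is join-irreducible: it covers exactly one element. -/
def JoinIrred (x : L) : Prop := ∃! z : L, z ⋖ x

/-- `x` is meet-irreducible: it is covered by exactly one element. -/
def MeetIrred (x : L) : Prop := ∃! y : L, x ⋖ y

/-- `x` is doubly irreducible: both join- and meet-irreducible. -/
def DoublyIrred (x : L) : Prop := JoinIrred x ∧ MeetIrred x

/-- `w` is a corner of `x`: `x` is doubly irreducible and there are `z`, `y`
such that `x` and `w` both cover `z` and are both covered by `y`. -/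
def IsCornerOf (w x : L) : Prop :=
  DoublyIrred x ∧ w ≠ x ∧ ∃ z y : L, z ⋖ x ∧ z ⋖ w ∧ x ⋖ y ∧ w ⋖ y

end Defs

/-- `b` covers `a` within the subposet `S` (with the order induced from `L`). -/
def CovWithin {L : Type*} [Lattice L] (S : Set L) (a b : L) : Prop :=
  a ∈ S ∧ b ∈ S ∧ a < b ∧ ∀ c ∈ S, a < c → ¬ c < b

/-- `x` is doubly irreducible in the subposet `S`: within `S` it covers exactly
one element and is covered by exactly one element. -/
def DoublyIrredWithin {L : Type*} [Lattice L] (S : Set L) (x : L) : Prop :=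
  x ∈ S ∧ (∃! z : L, CovWithin S z x) ∧ (∃! y : L, CovWithin S x y)

section Aux

variable {L : Type*} [Lattice L] [Finite L]

private lemma exists_le_covby {a b : L} (h : a < b) : ∃ c, a ≤ c ∧ c ⋖ b := by
  classical
  have hfin : ({c | a ≤ c ∧ c < b} : Set L).Finite := Set.toFinite _
  obtain ⟨m, hm, hmax⟩ := hfin.toFinset.exists_maximal
    ⟨a, by simp [Set.Finite.mem_toFinset]; exact h⟩
  rw [Set.Finite.mem_toFinset] at hm
  refine ⟨m, hm.1, hm.2, fun d hmd hdb => ?_⟩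
  exact lt_irrefl m (hmd.trans_le (hmax (y := d) (hfin.mem_toFinset.2 ⟨hm.1.trans hmd.le, hdb⟩) hmd.le))

private lemma exists_covby_le {a b : L} (h : a < b) : ∃ c, a ⋖ c ∧ c ≤ b := by
  classical
  have hfin : ({c | a < c ∧ c ≤ b} : Set L).Finite := Set.toFinite _
  obtain ⟨m, hm, hmin⟩ := hfin.toFinset.exists_minimal
    ⟨b, by simp [Set.Finite.mem_toFinset]; exact h⟩
  rw [Set.Finite.mem_toFinset] at hm
  refine ⟨m, ⟨hm.1, fun d had hdm => ?_⟩, hm.2⟩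
  exact lt_irrefl d (hdm.trans_le (hmin (y := d) (hfin.mem_toFinset.2 ⟨had, hdm.le.trans hm.2⟩) hdm.le))

variable {r : L → ℕ}

private lemma rank_strictmono (hcov : ∀ a b : L, a ⋖ b → r b = r a + 1) : ∀ b a : L, a < b → r a < r b := by
  have wf : WellFounded ((· < ·) : L → L → Prop) := wellFounded_lt
  intro b
  induction b using WellFounded.induction wf with
  | _ b ih =>
    intro a hab
    obtain ⟨c, hac, hcb⟩ := exists_le_covby hab
    rcases eq_or_lt_of_le hac with rfl | h
    · rw [hcov _ _ hcb]; omega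
    · have h1 := ih c hcb.lt a h
      rw [hcov _ _ hcb]; omega

private lemma covby_of_rank (hcov : ∀ a b : L, a ⋖ b → r b = r a + 1) {a b : L} (h : a < b) (hab : r b = r a + 1) : a ⋖ b := by
  refine ⟨h, fun d had hdb => ?_⟩
  have h1 := rank_strictmono hcov d a had
  have h2 := rank_strictmono hcov b d hdb
  omega

end Aux

section Main

private lemma no_stack
    (L : Type*) [Lattice L] [Finite L] [BoundedOrder L]
    (r : L → ℕ) (hr : IsRankFunction L r)
    (hconn : ∀ i : ℕ, i < r (⊤ : L) →
      (hasseGraph L {v : L | r v = i ∨ r v = i + 1}).Connected)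
    (hbig : ∀ i : ℕ, 0 < i → i < r (⊤ : L) → 2 ≤ {v : L | r v = i}.ncard)
    {p q : L} (hp : DoublyIrred p) (hq : DoublyIrred q) (hpq : p ⋖ q) : False := by
  obtain ⟨hr0, hcov⟩ := hr
  obtain ⟨zp, hzp, hzpu⟩ := hp.1
  obtain ⟨yp, hyp, hypu⟩ := hp.2
  obtain ⟨zq, hzq, hzqu⟩ := hq.1
  obtain ⟨yq, hyq, hyqu⟩ := hq.2
  set j := r p with hj
  have hrq : r q = j + 1 := hcov _ _ hpq
  have hj0 : 0 < j := by rw [hj, hcov _ _ hzp]; omega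
  have hqt : q < ⊤ := lt_of_lt_of_le hyq.lt le_top
  have hjt : j < r ⊤ := by have := rank_strictmono hcov ⊤ q hqt; omega
  have hex : ∃ u, r u = j ∧ u ≠ p := by
    by_contra h
    push_neg at h
    have hsub : {v : L | r v = j} ⊆ {p} := by
      intro v hv
      simp only [Set.mem_singleton_iff]
      exact h v hv
    have := Set.ncard_le_ncard hsub (Set.finite_singleton p)
    rw [Set.ncard_singleton] at this
    have := hbig j hj0 hjt
    omega
  obtain ⟨u, hu, hup⟩ := hex
  have hpV : p ∈ {v : L | r v = j ∨ r v = j + 1} := Or.inl rfl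
  have huV : u ∈ {v : L | r v = j ∨ r v = j + 1} := Or.inl hu
  have hclosed : ∀ a b : ↥{v : L | r v = j ∨ r v = j + 1},
      (hasseGraph L {v : L | r v = j ∨ r v = j + 1}).Adj a b →
      ((a : L) = p ∨ (a : L) = q) → ((b : L) = p ∨ (b : L) = q) := by
    rintro a b hab (ha | ha)
    · rcases (hab : ((a : L) ⋖ (b : L)) ∨ ((b : L) ⋖ (a : L))) with hc | hc
      · rw [ha] at hc
        right
        rw [hypu _ hc, ← hypu _ hpq]
      · rw [ha] at hc
        exfalso
        have h1 : (b : L) = zp := hzpu _ hc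
        have h2 : r p = r (b : L) + 1 := hcov _ _ hc
        have h3 := b.2
        simp only [Set.mem_setOf_eq] at h3
        omega
    · rcases (hab : ((a : L) ⋖ (b : L)) ∨ ((b : L) ⋖ (a : L))) with hc | hc
      · rw [ha] at hc
        exfalso
        have h2 : r (b : L) = j + 2 := by rw [hcov _ _ hc]; omega
        have h3 := b.2
        simp only [Set.mem_setOf_eq] at h3
        omega
      · rw [ha] at hc
        left
        rw [hzqu _ hc, ← hzqu _ hpq]
  have hwalk : ∀ (s t : ↥{v : L | r v = j ∨ r v = j + 1})
      (_ : (hasseGraph L {v : L | r v = j ∨ r v = j + 1}).Walk s t),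
      ((s : L) = p ∨ (s : L) = q) → ((t : L) = p ∨ (t : L) = q) := by
    intro s t w
    induction w with
    | nil => exact id
    | cons h w ih => intro hs; exact ih (hclosed _ _ h hs)
  obtain ⟨w⟩ := (hconn j hjt).preconnected ⟨p, hpV⟩ ⟨u, huV⟩
  rcases hwalk _ _ w (Or.inl rfl) with h | h
  · exact hup h
  · have h' : u = q := h
    rw [h'] at hu; omega

private lemma key_low
    (L : Type*) [Lattice L] [Finite L] [BoundedOrder L]
    (r : L → ℕ) (hr : IsRankFunction L r)
    (hconn : ∀ i : ℕ, i < r (⊤ : L) →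
      (hasseGraph L {v : L | r v = i ∨ r v = i + 1}).Connected)
    (hbig : ∀ i : ℕ, 0 < i → i < r (⊤ : L) → 2 ≤ {v : L | r v = i}.ncard)
    (hnc : ∀ x : L, DoublyIrred x → ∀ w : L, ¬ IsCornerOf w x)
    {c v : L} (hc : c ⋖ v) (hv : ¬ DoublyIrred v) :
    ∃ g, CovWithin {u : L | ¬ DoublyIrred u} g v ∧
      ((¬ DoublyIrred c ∧ g = c) ∨ (DoublyIrred c ∧ g ⋖ c)) := by
  obtain ⟨hr0, hcov⟩ := hr
  by_cases hcD : DoublyIrred c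
  · obtain ⟨zc, hzc, hzcu⟩ := hcD.1
    have hzS : ¬ DoublyIrred zc := fun hzD =>
      no_stack L r ⟨hr0, hcov⟩ hconn hbig hzD hcD hzc
    refine ⟨zc, ⟨hzS, hv, hzc.lt.trans hc.lt, ?_⟩, Or.inr ⟨hcD, hzc⟩⟩
    intro u huS hzu huv
    have h1 : r c = r zc + 1 := hcov _ _ hzc
    have h2 : r v = r c + 1 := hcov _ _ hc
    have h3 := rank_strictmono hcov u zc hzu
    have h4 := rank_strictmono hcov v u huv
    have hcu : zc ⋖ u := covby_of_rank hcov hzu (by omega)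
    have huv' : u ⋖ v := covby_of_rank hcov huv (by omega)
    have hne : u ≠ c := fun h => huS (h ▸ hcD)
    exact hnc c hcD u ⟨hcD, hne, zc, v, hzc, hcu, hc, huv'⟩
  · refine ⟨c, ⟨hcD, hv, hc.lt, ?_⟩, Or.inl ⟨hcD, rfl⟩⟩
    intro u _ hcu huv
    exact hc.2 hcu huv

private lemma key_high
    (L : Type*) [Lattice L] [Finite L] [BoundedOrder L]
    (r : L → ℕ) (hr : IsRankFunction L r)
    (hconn : ∀ i : ℕ, i < r (⊤ : L) →
      (hasseGraph L {v : L | r v = i ∨ r v = i + 1}).Connected)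
    (hbig : ∀ i : ℕ, 0 < i → i < r (⊤ : L) → 2 ≤ {v : L | r v = i}.ncard)
    (hnc : ∀ x : L, DoublyIrred x → ∀ w : L, ¬ IsCornerOf w x)
    {c v : L} (hc : v ⋖ c) (hv : ¬ DoublyIrred v) :
    ∃ g, CovWithin {u : L | ¬ DoublyIrred u} v g ∧
      ((¬ DoublyIrred c ∧ g = c) ∨ (DoublyIrred c ∧ c ⋖ g)) := by
  obtain ⟨hr0, hcov⟩ := hr
  by_cases hcD : DoublyIrred c
  · obtain ⟨yc, hyc, hycu⟩ := hcD.2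
    have hyS : ¬ DoublyIrred yc := fun hyD =>
      no_stack L r ⟨hr0, hcov⟩ hconn hbig hcD hyD hyc
    refine ⟨yc, ⟨hv, hyS, hc.lt.trans hyc.lt, ?_⟩, Or.inr ⟨hcD, hyc⟩⟩
    intro u huS hvu huy
    have h1 : r c = r v + 1 := hcov _ _ hc
    have h2 : r yc = r c + 1 := hcov _ _ hyc
    have h3 := rank_strictmono hcov u v hvu
    have h4 := rank_strictmono hcov yc u huy
    have hvu' : v ⋖ u := covby_of_rank hcov hvu (by omega)
    have huy' : u ⋖ yc := covby_of_rank hcov huy (by omega)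
    have hne : u ≠ c := fun h => huS (h ▸ hcD)
    exact hnc c hcD u ⟨hcD, hne, v, yc, hc, hvu', hyc, huy'⟩
  · refine ⟨c, ⟨hv, hcD, hc.lt, ?_⟩, Or.inl ⟨hcD, rfl⟩⟩
    intro u _ hvu huc
    exact hc.2 hvu huc

end Main

/-- Let `L` be a finite, rank-connected, dismantlable lattice
all of whose intermediate rank sets have at least two elements, and let `D` be
the set of doubly irreducible elements of `L`.  If no element of `D` has a
corner, then the sublattice `L - D` has no doubly irreducible elements. -/
theorem removing_doublyIrred_leaves_no_doublyIrred
    (L : Type*) [Lattice L] [Finite L] [BoundedOrder L]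
    (r : L → ℕ) (hr : IsRankFunction L r)
    (hconn : ∀ i : ℕ, i < r (⊤ : L) →
      (hasseGraph L {v : L | r v = i ∨ r v = i + 1}).Connected)
    (hd : Dismantlable L)
    (hbig : ∀ i : ℕ, 0 < i → i < r (⊤ : L) → 2 ≤ {v : L | r v = i}.ncard)
    (hnc : ∀ x : L, DoublyIrred x → ∀ w : L, ¬ IsCornerOf w x) :
    ∀ v : L, ¬ DoublyIrred v → ¬ DoublyIrredWithin {u : L | ¬ DoublyIrred u} v := by
  intro v hv hdw
  obtain ⟨hvS, ⟨zl, hzl, hzlu⟩, ⟨yu, hyu, hyuu⟩⟩ := hdw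
  have hcov := hr.2
  by_cases hJ : JoinIrred v
  · -- then v is not meet-irreducible; work with upper covers
    have hM : ¬ MeetIrred v := fun hM => hv ⟨hJ, hM⟩
    obtain ⟨a, hva, _⟩ := exists_covby_le hyu.2.2.1
    obtain ⟨b, hvb, hba⟩ : ∃ b, v ⋖ b ∧ b ≠ a := by
      by_contra h
      push_neg at h
      exact hM ⟨a, hva, h⟩
    obtain ⟨ga, hga, hgac⟩ := key_high L r hr hconn hbig hnc hva hv
    obtain ⟨gb, hgb, hgbc⟩ := key_high L r hr hconn hbig hnc hvb hv
    have e1 : ga = yu := hyuu _ hga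
    have e2 : gb = yu := hyuu _ hgb
    rcases hgac with ⟨haS, rfl⟩ | ⟨haD, hag⟩ <;>
      rcases hgbc with ⟨hbS, rfl⟩ | ⟨hbD, hbg⟩
    · exact hba (e2.trans e1.symm)
    · have h1 : r ga = r v + 1 := hcov _ _ hva
      have h2 : r gb = r b + 1 := hcov _ _ hbg
      have h3 : r b = r v + 1 := hcov _ _ hvb
      rw [e1, e2] at *
      omega
    · have h1 : r gb = r v + 1 := hcov _ _ hvb
      have h2 : r ga = r a + 1 := hcov _ _ hag
      have h3 : r a = r v + 1 := hcov _ _ hva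
      rw [e1, e2] at *
      omega
    · rw [e1] at hag
      rw [e2] at hbg
      exact hnc a haD b ⟨haD, hba, v, yu, hva, hvb, hag, hbg⟩
  · -- v is not join-irreducible; work with lower covers
    obtain ⟨a, _, hva⟩ := exists_le_covby hzl.2.2.1
    obtain ⟨b, hvb, hba⟩ : ∃ b, b ⋖ v ∧ b ≠ a := by
      by_contra h
      push_neg at h
      exact hJ ⟨a, hva, h⟩
    obtain ⟨ga, hga, hgac⟩ := key_low L r hr hconn hbig hnc hva hv
    obtain ⟨gb, hgb, hgbc⟩ := key_low L r hr hconn hbig hnc hvb hv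
    have e1 : ga = zl := hzlu _ hga
    have e2 : gb = zl := hzlu _ hgb
    rcases hgac with ⟨haS, rfl⟩ | ⟨haD, hag⟩ <;>
      rcases hgbc with ⟨hbS, rfl⟩ | ⟨hbD, hbg⟩
    · exact hba (e2.trans e1.symm)
    · have h1 : r v = r ga + 1 := hcov _ _ hva
      have h2 : r b = r gb + 1 := hcov _ _ hbg
      have h3 : r v = r b + 1 := hcov _ _ hvb
      rw [e1, e2] at *
      omega
    · have h1 : r v = r gb + 1 := hcov _ _ hvb
      have h2 : r a = r ga + 1 := hcov _ _ hag
      have h3 : r v = r a + 1 := hcov _ _ hva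
      rw [e1, e2] at *
      omega
    · rw [e1] at hag
      rw [e2] at hbg
      exact hnc a haD b ⟨haD, hba, zl, v, hag, hbg, hva, hvb⟩
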